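/- In the concrete quasi-free CAR model with past P = {n ∈ ℤ : n < 0} and future F = {n ∈ ℤ : n ≥ 0}, with λ : ℤ → ℝ, 0 < λ_l < 1: let H₀ := ℓ²(Finset ℕ × Finset ℕ) with orthonormal basis (e⁰_{(A,B)}) indexed by pairs of finite subsets of ℕ, and let a⁰_l (l ∈ ℕ) be the operators on H₀ defined by the same formulas as a_l using λ restricted to ℕ ⊆ ℤ. Let I₁, I₂ be finite subsets of P with card I₁ ≡ card I₂ (mod 2), and let T = T_{I₁I₂} : H₀ → H be the bounded linear operator determined by T e⁰_{(A,B)} = (−1)^{card I₂ · card B}·e_{(I₁ ∪ A, I₂ ∪ B)} (where A, B ⊆ ℕ are regarded as subsets of ℤ via ℕ ⊆ ℤ). Then for every l ∈ ℕ: a_l ∘ T = T ∘ a⁰_l and a_l* ∘ T = T ∘ (a⁰_l)*. (These operators T_{I₁I₂} are common intertwiners of the CAR flow α_t and of its commutant flow; they span the fibre H_t of the super product system of the CAR flow.) -/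

import Mathlib

/- The concrete quasi-free CAR model over a linearly ordered index type `α`:
`FockSpace α = ℓ²(Finset α × Finset α)` with orthonormal basis `fockE (A, B)`, and the
quasi-free annihilation-type operators given on the basis by the quasi-free formulas with
diagonal symbol `λ`.  We instantiate it both at `α = ℤ` (the GNS space `H` of `M_R`) and at
`α = ℕ` (the space `H₀`). -/

noncomputable section

/-- `ℓ²` over pairs of finite subsets of `α`. -/
abbrev FockSpace (α : Type) : Type := lp (fun _ : Finset α × Finset α => ℂ) 2

/-- The orthonormal basis vector `e_{(A,B)}`. -/
def fockE {α : Type} [DecidableEq α] (p : Finset α × Finset α) : FockSpace α :=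
  lp.single 2 p 1

/-- `n(l, X)` = number of elements of `X` strictly below `l`. -/
def nlt {α : Type} [LinearOrder α] (l : α) (X : Finset α) : ℕ :=
  (X.filter fun j => j < l).card

/-- `a` is the family of quasi-free annihilation-type operators:
`a_l e_{(A,B)} = √(1−λ_l)·(−1)^{|B|}·(−1)^{n(l,A)}·[l ∉ A]·e_{(A∪{l},B)}
              + √(λ_l)·(−1)^{n(l,B)}·[l ∈ B]·e_{(A,B∖{l})}`. -/
def IsCAR_a {α : Type} [LinearOrder α] (lam : α → ℝ)
    (a : α → FockSpace α →L[ℂ] FockSpace α) : Prop :=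
  ∀ (l : α) (A B : Finset α),
    a l (fockE (A, B)) =
      ((Real.sqrt (1 - lam l) : ℂ) * (-1) ^ B.card * (-1) ^ nlt l A *
          (if l ∈ A then 0 else 1)) • fockE (insert l A, B) +
      ((Real.sqrt (lam l) : ℂ) * (-1) ^ nlt l B *
          (if l ∈ B then 1 else 0)) • fockE (A, B.erase l)

namespace Stmt19Aux

local notation "⟪" x ", " y "⟫" => @inner ℂ _ _ x y

lemma inner_fockE_left {α : Type} [DecidableEq α] (p : Finset α × Finset α)
    (f : FockSpace α) : ⟪fockE p, f⟫ = f p := by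
  simp [fockE, lp.inner_single_left]

lemma fock_ext {α : Type} [DecidableEq α] {v w : FockSpace α}
    (h : ∀ p, ⟪fockE p, v⟫ = ⟪fockE p, w⟫) : v = w :=
  lp.ext (funext fun p => by simpa [inner_fockE_left] using h p)

lemma inner_fockE_fockE {α : Type} [DecidableEq α] (p q : Finset α × Finset α) :
    ⟪fockE p, fockE q⟫ = if p = q then 1 else 0 := by
  rw [inner_fockE_left]
  simp [fockE, lp.single_apply, Pi.single_apply]

lemma clm_ext {α : Type} [DecidableEq α] {F : Type} [NormedAddCommGroup F]
    [NormedSpace ℂ F]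
    {S₁ S₂ : FockSpace α →L[ℂ] F} (h : ∀ p, S₁ (fockE p) = S₂ (fockE p)) : S₁ = S₂ := by
  ext x
  have hx := lp.hasSum_single (E := fun _ : Finset α × Finset α => ℂ) ENNReal.ofNat_ne_top x
  have hsingle : ∀ p : Finset α × Finset α, lp.single (E := fun _ : Finset α × Finset α => ℂ)
      2 p (x p) = x p • fockE p := by
    intro p
    rw [fockE, ← lp.single_smul]
    norm_num
  have h1 := hx.mapL S₁
  have h2 := hx.mapL S₂
  refine h1.unique ?_
  convert h2 using 2 with p
  simp [hsingle, h p]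

lemma neg_one_pow_congr {m n : ℕ} (h : m % 2 = n % 2) : (-1 : ℂ) ^ m = (-1 : ℂ) ^ n := by
  rw [← Nat.div_add_mod m 2, ← Nat.div_add_mod n 2, h, pow_add, pow_add, pow_mul, pow_mul]
  norm_num

lemma nlt_insert_self {α : Type} [LinearOrder α] (l : α) (X : Finset α) :
    nlt l (insert l X) = nlt l X := by
  classical
  simp [nlt, Finset.filter_insert]

lemma nlt_erase_self {α : Type} [LinearOrder α] (l : α) (X : Finset α) :
    nlt l (X.erase l) = nlt l X := by
  classical
  rw [nlt, nlt, Finset.filter_erase, Finset.erase_eq_of_notMem (by simp)]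



lemma adjoint_fockE {α : Type} [LinearOrder α] {lam : α → ℝ}
    {a : α → FockSpace α →L[ℂ] FockSpace α} (ha : IsCAR_a lam a)
    (l : α) (A B : Finset α) :
    ContinuousLinearMap.adjoint (a l) (fockE (A, B)) =
      ((Real.sqrt (1 - lam l) : ℂ) * (-1) ^ B.card * (-1) ^ nlt l A *
          (if l ∈ A then 1 else 0)) • fockE (A.erase l, B) +
      ((Real.sqrt (lam l) : ℂ) * (-1) ^ nlt l B *
          (if l ∈ B then 0 else 1)) • fockE (A, insert l B) := by
  classical
  apply fock_ext
  rintro ⟨C, D⟩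
  rw [ContinuousLinearMap.adjoint_inner_right, ha l C D]
  rw [inner_add_left, inner_smul_left, inner_smul_left,
      inner_add_right, inner_smul_right, inner_smul_right,
      inner_fockE_fockE, inner_fockE_fockE, inner_fockE_fockE, inner_fockE_fockE]
  simp only [map_mul, map_pow, map_neg, map_one, Complex.conj_ofReal,
    apply_ite (starRingEnd ℂ), map_zero]
  have claim1 : ((Real.sqrt (1 - lam l) : ℂ) * (-1) ^ D.card * (-1) ^ nlt l C *
        (if l ∈ C then 0 else 1)) * (if ((insert l C, D) : Finset α × Finset α) = (A, B) then 1 else 0) =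
      ((Real.sqrt (1 - lam l) : ℂ) * (-1) ^ B.card * (-1) ^ nlt l A *
        (if l ∈ A then 1 else 0)) * (if ((C, D) : Finset α × Finset α) = (A.erase l, B) then 1 else 0) := by
    by_cases h : ((insert l C, D) : Finset α × Finset α) = (A, B)
    · obtain ⟨rfl, rfl⟩ : insert l C = A ∧ D = B := Prod.mk.injEq .. ▸ h
      by_cases hC : l ∈ C
      · have hne : C ≠ C.erase l := fun hcc => Finset.notMem_erase l C (hcc ▸ hC)
        simp [hC, Finset.insert_eq_self.2 hC, hne]
      · simp [hC, Finset.erase_insert hC, nlt_insert_self]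
    · rw [if_neg h, mul_zero]
      by_cases h2 : ((C, D) : Finset α × Finset α) = (A.erase l, B)
      · by_cases hA : l ∈ A
        · refine absurd ?_ h
          rw [Prod.mk.injEq] at h2 ⊢
          exact ⟨by rw [h2.1, Finset.insert_erase hA], h2.2⟩
        · simp [hA]
      · rw [if_neg h2, mul_zero]
  have claim2 : ((Real.sqrt (lam l) : ℂ) * (-1) ^ nlt l D *
        (if l ∈ D then 1 else 0)) * (if ((C, D.erase l) : Finset α × Finset α) = (A, B) then 1 else 0) =
      ((Real.sqrt (lam l) : ℂ) * (-1) ^ nlt l B *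
        (if l ∈ B then 0 else 1)) * (if ((C, D) : Finset α × Finset α) = (A, insert l B) then 1 else 0) := by
    by_cases h : ((C, D.erase l) : Finset α × Finset α) = (A, B)
    · obtain ⟨rfl, rfl⟩ : C = A ∧ D.erase l = B := Prod.mk.injEq .. ▸ h
      by_cases hD : l ∈ D
      · simp [hD, Finset.insert_erase hD, nlt_erase_self, Finset.notMem_erase]
      · have hne : D ≠ insert l D := fun hh => hD (by rw [hh]; exact Finset.mem_insert_self l D)
        simp [hD, Finset.erase_eq_of_notMem hD, hne]
    · rw [if_neg h, mul_zero]
      by_cases h2 : ((C, D) : Finset α × Finset α) = (A, insert l B)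
      · by_cases hB : l ∈ B
        · simp [hB]
        · refine absurd ?_ h
          rw [Prod.mk.injEq] at h2 ⊢
          exact ⟨h2.1, by rw [h2.2, Finset.erase_insert hB]⟩
      · rw [if_neg h2, mul_zero]
    
  linear_combination claim1 + claim2

section NatInt

abbrev cst : ℕ → ℤ := fun n => (n : ℤ)

lemma cst_inj : Function.Injective cst := fun _ _ h => by exact_mod_cast h

variable {I : Finset ℤ} (hI : ∀ n ∈ I, n < 0) (l : ℕ) (A : Finset ℕ)
include hI

lemma not_mem_I : (l : ℤ) ∉ I := fun h => by have := hI _ h; omega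

lemma mem_union_iff : (l : ℤ) ∈ I ∪ A.image cst ↔ l ∈ A := by
  simp only [Finset.mem_union, Finset.mem_image]
  constructor
  · rintro (h | ⟨n, hn, hn2⟩)
    · exact absurd h (not_mem_I hI l)
    · rwa [show n = l from by exact_mod_cast hn2] at hn
  · intro h; exact Or.inr ⟨l, h, rfl⟩

omit hI in
lemma insert_union_eq : insert (l : ℤ) (I ∪ A.image cst) = I ∪ (insert l A).image cst := by
  rw [Finset.image_insert, Finset.union_insert]

lemma erase_union_eq : (I ∪ A.image cst).erase (l : ℤ) = I ∪ (A.erase l).image cst := by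
  rw [Finset.erase_union_distrib, Finset.erase_eq_of_notMem (not_mem_I hI l),
    Finset.image_erase cst_inj]

lemma disjoint_I_image : Disjoint I (A.image cst) := by
  rw [Finset.disjoint_left]
  rintro x hx hx2
  obtain ⟨n, -, rfl⟩ := Finset.mem_image.1 hx2
  have := hI _ hx; simp only [cst] at this; omega

lemma card_union : (I ∪ A.image cst).card = I.card + A.card := by
  rw [Finset.card_union_of_disjoint (disjoint_I_image hI A),
    Finset.card_image_of_injective _ cst_inj]

lemma nlt_union : nlt (l : ℤ) (I ∪ A.image cst) = I.card + nlt l A := by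
  classical
  rw [nlt, Finset.filter_union]
  rw [Finset.filter_true_of_mem (fun x hx => (hI x hx).trans_le (by positivity))]
  have himg : (A.image cst).filter (fun j => j < (l : ℤ)) =
      (A.filter fun j => j < l).image cst := by
    rw [Finset.filter_image]
    congr 1
    ext n
    simp [cst]
  rw [himg]
  exact card_union hI _

end NatInt
end Stmt19Aux

open Stmt19Aux in
/-- let `I₁, I₂` be finite subsets of the past `P = {n < 0}` with
`card I₁ ≡ card I₂ (mod 2)`, and let `T = T_{I₁I₂} : H₀ → H` be the bounded operator
determined by `T e⁰_{(A,B)} = (−1)^{card I₂ · card B}·e_{(I₁∪A, I₂∪B)}` (subsets of `ℕ`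
regarded as subsets of `ℤ`).  Then for every `l ∈ ℕ`:
`a_l ∘ T = T ∘ a⁰_l` and `a_l* ∘ T = T ∘ (a⁰_l)*`. -/
theorem stmt19 (lam : ℤ → ℝ) (hlam : ∀ l, 0 < lam l ∧ lam l < 1)
    (a : ℤ → FockSpace ℤ →L[ℂ] FockSpace ℤ) (ha : IsCAR_a lam a)
    (a0 : ℕ → FockSpace ℕ →L[ℂ] FockSpace ℕ)
    (ha0 : IsCAR_a (fun n : ℕ => lam (n : ℤ)) a0)
    (I₁ I₂ : Finset ℤ) (hI₁ : ∀ n ∈ I₁, n < 0) (hI₂ : ∀ n ∈ I₂, n < 0)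
    (hpar : I₁.card % 2 = I₂.card % 2)
    (T : FockSpace ℕ →L[ℂ] FockSpace ℤ)
    (hT : ∀ A B : Finset ℕ, T (fockE (A, B)) =
      ((-1 : ℂ) ^ (I₂.card * B.card)) •
        fockE (I₁ ∪ A.image (fun n : ℕ => (n : ℤ)), I₂ ∪ B.image (fun n : ℕ => (n : ℤ)))) :
    ∀ l : ℕ,
      (a (l : ℤ)) ∘L T = T ∘L a0 l ∧
      ContinuousLinearMap.adjoint (a (l : ℤ)) ∘L T =
        T ∘L ContinuousLinearMap.adjoint (a0 l) := by
  classical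
  have hT' : ∀ A B : Finset ℕ, T (fockE (A, B)) =
      ((-1 : ℂ) ^ (I₂.card * B.card)) • fockE (I₁ ∪ A.image cst, I₂ ∪ B.image cst) := hT
  have h12 : (-1 : ℂ) ^ I₁.card = (-1 : ℂ) ^ I₂.card := neg_one_pow_congr hpar
  have hsq : ∀ n : ℕ, (-1 : ℂ) ^ n * (-1) ^ n = 1 := fun n => by
    rw [← pow_add, ← two_mul, pow_mul]; norm_num
  have sgn1 : ∀ m s x b n : ℂ, x * x = 1 → m * (s * (x * b) * (x * n)) = s * b * n * m :=
    fun m s x b n hx => by linear_combination m * s * b * n * hx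
  have sgn2 : ∀ m s x n : ℂ, x * x = 1 → m * x * (s * (x * n)) = s * n * m :=
    fun m s x n hx => by linear_combination m * s * n * hx
  have sgn3 : ∀ m s x n : ℂ, m * (s * (x * n)) = s * n * (m * x) :=
    fun m s x n => by ring
  intro l
  constructor
  · apply clm_ext
    rintro ⟨A, B⟩
    simp only [ContinuousLinearMap.comp_apply]
    rw [hT', map_smul, ha, ha0, map_add, map_smul, map_smul, hT', hT']
    simp only [mem_union_iff hI₁, mem_union_iff hI₂, insert_union_eq,
      erase_union_eq hI₂, card_union hI₂, nlt_union hI₁ l A, nlt_union hI₂ l B,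
      smul_add, smul_smul]
    congr 1
    · congr 1
      by_cases hA : l ∈ A
      · simp [hA]
      · simp only [hA, ite_false, mul_one]
        rw [pow_add, pow_add, h12]
        exact sgn1 _ _ _ _ _ (hsq I₂.card)
    · congr 1
      by_cases hB : l ∈ B
      · have hc := Finset.card_erase_add_one hB
        simp only [hB, ite_true, mul_one]
        rw [← hc, mul_add, mul_one, pow_add, pow_add]
        exact sgn2 _ _ _ _ (hsq I₂.card)
      · simp [hB]
  · apply clm_ext
    rintro ⟨A, B⟩
    simp only [ContinuousLinearMap.comp_apply]
    rw [hT', map_smul, adjoint_fockE ha, adjoint_fockE ha0, map_add, map_smul, map_smul,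
      hT', hT']
    simp only [mem_union_iff hI₁, mem_union_iff hI₂, insert_union_eq,
      erase_union_eq hI₁, card_union hI₂, nlt_union hI₁ l A, nlt_union hI₂ l B,
      smul_add, smul_smul]
    congr 1
    · congr 1
      by_cases hA : l ∈ A
      · simp only [hA, ite_true, mul_one]
        rw [pow_add, pow_add, h12]
        exact sgn1 _ _ _ _ _ (hsq I₂.card)
      · simp [hA]
    · congr 1
      by_cases hB : l ∈ B
      · simp [hB]
      · have hc : (insert l B).card = B.card + 1 := Finset.card_insert_of_notMem hB
        simp only [hB, ite_false, mul_one]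
        rw [hc, mul_add, mul_one, pow_add, pow_add]
        exact sgn3 _ _ _ _

end
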